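/- arXiv:2404.13608 — 2 statements merged into one kernel-verified Lean document; each statement's English description precedes it below -/
import Mathlib

section
/- In an orthomodular lattice, for every element a, the map b ↦ a ⊓ₛ b is left adjoint to the map c ↦ a ⇝ₛ c; that is, for all a, b, c: a ⊓ (aᶜ ⊔ b) ≤ c if and only if b ≤ aᶜ ⊔ (a ⊓ c). -/
/-- An orthomodular lattice: a bounded lattice with an orthocomplementation
satisfying involution, order-reversal, complementation laws, and the
orthomodular law. -/
class OrthomodularLattice (α : Type*) extends Lattice α, BoundedOrder α, Compl α where
  compl_compl : ∀ a : α, aᶜᶜ = a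
  compl_le_compl : ∀ a b : α, a ≤ b → bᶜ ≤ aᶜ
  inf_compl_eq_bot : ∀ a : α, a ⊓ aᶜ = ⊥
  sup_compl_eq_top : ∀ a : α, a ⊔ aᶜ = ⊤
  orthomodular : ∀ a b : α, a ≤ b → a ⊔ (aᶜ ⊓ b) = b

section Aux
open OrthomodularLattice
variable {α : Type*} [OrthomodularLattice α]

lemma OML.le_compl_iff {a b : α} : a ≤ bᶜ ↔ b ≤ aᶜ := by
  constructor
  · intro h
    have := OrthomodularLattice.compl_le_compl a bᶜ h
    rwa [OrthomodularLattice.compl_compl] at this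
  · intro h
    have := OrthomodularLattice.compl_le_compl b aᶜ h
    rwa [OrthomodularLattice.compl_compl] at this

lemma OML.compl_sup (a b : α) : (a ⊔ b)ᶜ = aᶜ ⊓ bᶜ := by
  apply le_antisymm
  · exact le_inf (OrthomodularLattice.compl_le_compl _ _ le_sup_left) (OrthomodularLattice.compl_le_compl _ _ le_sup_right)
  · rw [← OrthomodularLattice.compl_compl (aᶜ ⊓ bᶜ)]
    apply OrthomodularLattice.compl_le_compl
    exact sup_le (OML.le_compl_iff.mpr inf_le_left) (OML.le_compl_iff.mpr inf_le_right)

lemma OML.compl_inf (a b : α) : (a ⊓ b)ᶜ = aᶜ ⊔ bᶜ := by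
  rw [← OrthomodularLattice.compl_compl (aᶜ ⊔ bᶜ), OML.compl_sup, OrthomodularLattice.compl_compl, OrthomodularLattice.compl_compl]

end Aux

/-- The Sasaki projection `b ↦ a ⊓ₛ b` is left adjoint to the Sasaki hook
`c ↦ a ⇝ₛ c`. -/
theorem sasaki_adjunction {α : Type*} [OrthomodularLattice α] (a b c : α) :
    a ⊓ (aᶜ ⊔ b) ≤ c ↔ b ≤ aᶜ ⊔ (a ⊓ c) := by
  open OrthomodularLattice in
  constructor
  · intro h
    have hom : aᶜ ⊔ (aᶜᶜ ⊓ (aᶜ ⊔ b)) = aᶜ ⊔ b := orthomodular aᶜ (aᶜ ⊔ b) le_sup_left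
    rw [OrthomodularLattice.compl_compl] at hom
    calc b ≤ aᶜ ⊔ b := le_sup_right
      _ = aᶜ ⊔ (a ⊓ (aᶜ ⊔ b)) := hom.symm
      _ ≤ aᶜ ⊔ (a ⊓ c) := sup_le_sup_left (le_inf inf_le_left h) _
  · intro h
    have step : a ⊓ (aᶜ ⊔ b) ≤ a ⊓ (aᶜ ⊔ (a ⊓ c)) :=
      inf_le_inf_left a (sup_le le_sup_left h)
    set y := a ⊓ (aᶜ ⊔ (a ⊓ c)) with hy
    have h1 : a ⊓ c ≤ y := le_inf inf_le_left le_sup_right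
    have hz : aᶜ ⊔ (a ⊓ c) = (a ⊓ (a ⊓ c)ᶜ)ᶜ := by
      rw [OML.compl_inf, OrthomodularLattice.compl_compl]
    have h2 : (a ⊓ c)ᶜ ⊓ y = ⊥ := by
      apply le_antisymm _ bot_le
      have hy1 : (a ⊓ c)ᶜ ⊓ y ≤ a ⊓ (a ⊓ c)ᶜ :=
        le_inf (inf_le_right.trans inf_le_left) inf_le_left
      have hy2 : (a ⊓ c)ᶜ ⊓ y ≤ (a ⊓ (a ⊓ c)ᶜ)ᶜ := inf_le_right.trans (hz ▸ inf_le_right)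
      calc (a ⊓ c)ᶜ ⊓ y ≤ (a ⊓ (a ⊓ c)ᶜ) ⊓ (a ⊓ (a ⊓ c)ᶜ)ᶜ := le_inf hy1 hy2
        _ = ⊥ := inf_compl_eq_bot _
    have hom : (a ⊓ c) ⊔ ((a ⊓ c)ᶜ ⊓ y) = y := orthomodular _ _ h1
    rw [h2, sup_bot_eq] at hom
    exact step.trans (hom ▸ inf_le_right)
end

section
/- Let L be an orthomodular lattice and let V ⊆ L be a Boolean subalgebra (a subalgebra of L that is a distributive, hence Boolean, bounded sublattice closed under ᶜ). For an element p ∈ L, define the inner daseinisation δⁱ(p) := ⨆ {q ∈ V | q ≤ p} and the outer daseinisation of pᶜ as δᵒ(pᶜ) := ⨅ {q ∈ V | pᶜ ≤ q}, assuming both exist in V. Then δⁱ(p) ⊓ δᵒ(pᶜ) = 0 and δⁱ(p) ⊔ δᵒ(pᶜ) = 1, i.e., δⁱ(p) and δᵒ(pᶜ) are complements of each other in V. -/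
/-- In an orthomodular lattice `L` with a Boolean subalgebra `V`, the inner
daseinisation of `p` and the outer daseinisation of `pᶜ` are complements of
each other in `V`. -/
theorem daseinisation_compl {α : Type*} [OrthomodularLattice α]
    (V : Set α)
    (hbot : ⊥ ∈ V) (htop : ⊤ ∈ V)
    (hinf : ∀ a ∈ V, ∀ b ∈ V, a ⊓ b ∈ V)
    (hsup : ∀ a ∈ V, ∀ b ∈ V, a ⊔ b ∈ V)
    (hcompl : ∀ a ∈ V, aᶜ ∈ V)
    (hdistrib : ∀ a ∈ V, ∀ b ∈ V, ∀ c ∈ V, a ⊓ (b ⊔ c) = (a ⊓ b) ⊔ (a ⊓ c))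
    (p di do' : α)
    -- di is the supremum in V of {q ∈ V | q ≤ p} (inner daseinisation of p)
    (hdiV : di ∈ V) (hdi_le : di ≤ p)
    (hdi_lub : ∀ q ∈ V, q ≤ p → q ≤ di)
    -- do' is the infimum in V of {q ∈ V | pᶜ ≤ q} (outer daseinisation of pᶜ)
    (hdoV : do' ∈ V) (hdo_ge : pᶜ ≤ do')
    (hdo_glb : ∀ q ∈ V, pᶜ ≤ q → do' ≤ q) :
    di ⊓ do' = ⊥ ∧ di ⊔ do' = ⊤ := by
  have key : do' = diᶜ := by
    apply le_antisymm
    · exact hdo_glb diᶜ (hcompl di hdiV)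
        (by simpa [OrthomodularLattice.compl_compl] using
          OrthomodularLattice.compl_le_compl di p hdi_le)
    · have h1 : do'ᶜ ≤ p := by
        simpa [OrthomodularLattice.compl_compl] using
          OrthomodularLattice.compl_le_compl pᶜ do' hdo_ge
      have h2 : do'ᶜ ≤ di := hdi_lub do'ᶜ (hcompl do' hdoV) h1
      simpa [OrthomodularLattice.compl_compl] using
        OrthomodularLattice.compl_le_compl do'ᶜ di h2
  subst key
  exact ⟨OrthomodularLattice.inf_compl_eq_bot di,
         OrthomodularLattice.sup_compl_eq_top di⟩
end
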